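/- Let n, d ≥ 1 be positive integers and let S ⊆ ℤⁿ be a finite generating set such that for each g ∈ S, the set {1 ≤ i ≤ n : π_i(g) ≠ 0} has size either 1 or n. Then there exist a positive integer Δ ≥ d and a clopen subset M ⊆ F(2^{ℤⁿ}) such that: (1) for any distinct x, y ∈ M in the same orbit, ρ(x,y) ≥ d; (2) for every g ∈ S and x ∈ F(2^{ℤⁿ}) there are non-negative integers a, b ≤ Δ with (a·g)·x ∈ M and (−b·g)·x ∈ M. -/

import Mathlib

/-- The space `2^{ℤⁿ}` with the product topology. -/
abbrev Space (n : ℕ) : Type := (Fin n → ℤ) → Bool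

/-- The Bernoulli shift action: `(g · x)(h) = x(g + h)`. -/
def shift {n : ℕ} (g : Fin n → ℤ) (x : Space n) : Space n := fun h => x (g + h)

/-- The free part `F(2^{ℤⁿ})` of the shift action. -/
def FreePart (n : ℕ) : Set (Space n) := {x | ∀ g : Fin n → ℤ, g ≠ 0 → shift g x ≠ x}

/-- The sup norm on `ℤⁿ`, valued in `ℕ`. -/
def gnorm {n : ℕ} (g : Fin n → ℤ) : ℕ := Finset.univ.sup fun i => (g i).natAbs

set_option maxHeartbeats 1000000

section W13section
namespace W13

open Finset

variable {n : ℕ}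

lemma shift_shift (a b : Fin n → ℤ) (x : Space n) : shift a (shift b x) = shift (b + a) x := by
  funext h; simp [shift, add_assoc]

lemma shift_zero (x : Space n) : shift 0 x = x := by funext h; simp [shift]

lemma freePart_shift {x : Space n} (hx : x ∈ FreePart n) (g : Fin n → ℤ) :
    shift g x ∈ FreePart n := by
  intro h hh he
  apply hx h hh
  have := congrArg (shift (-g)) he
  simp only [shift_shift] at this
  have e1 : g + h + -g = h := by ring
  have e2 : g + -g = 0 := by ring
  rw [e1, e2, shift_zero] at this
  exact this

lemma gnorm_le_iff {g : Fin n → ℤ} {B : ℕ} : gnorm g ≤ B ↔ ∀ i, (g i).natAbs ≤ B := by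
  simp [gnorm, Finset.sup_le_iff]

lemma natAbs_le_gnorm (g : Fin n → ℤ) (i : Fin n) : (g i).natAbs ≤ gnorm g :=
  Finset.le_sup (f := fun i => (g i).natAbs) (by simp)

/-- sup-norm ball as a Finset -/
noncomputable def ballZ (n r : ℕ) : Finset (Fin n → ℤ) := Fintype.piFinset (fun _ => Finset.Icc (-(r:ℤ)) r)

lemma mem_ballZ {r : ℕ} {g : Fin n → ℤ} : g ∈ ballZ n r ↔ gnorm g ≤ r := by
  simp only [ballZ, Fintype.mem_piFinset, Finset.mem_Icc, gnorm_le_iff]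
  constructor
  · intro h i; have := h i; omega
  · intro h i; have := h i; omega


open Finset

/-- digit uniqueness: a nonzero bounded-digit number in base T is nonzero -/
lemma digit_ne_zero {T B : ℕ} (hT : 2*B + 1 ≤ T) {m : ℕ} (w : ℕ → ℤ)
    (hb : ∀ i, (w i).natAbs ≤ B) (hex : ∃ i, i < m ∧ w i ≠ 0) :
    (∑ i ∈ Finset.range m, w i * (T:ℤ)^i) ≠ 0 := by
  induction m with
  | zero => obtain ⟨i, hi, _⟩ := hex; omega
  | succ m ih =>
    rw [Finset.sum_range_succ]
    by_cases hm : w m = 0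
    · rw [hm]; simp only [zero_mul, add_zero]
      apply ih
      obtain ⟨i, hi, hwi⟩ := hex
      refine ⟨i, ?_, hwi⟩
      rcases Nat.lt_succ_iff_lt_or_eq.mp hi with h | h
      · exact h
      · exact absurd (h ▸ hwi) (by simp [hm])
    · have hgeom : (∑ i ∈ range m, (T:ℤ)^i) * ((T:ℤ) - 1) = (T:ℤ)^m - 1 := geom_sum_mul _ _
      have hgpos : (0:ℤ) ≤ ∑ i ∈ range m, (T:ℤ)^i :=
        Finset.sum_nonneg (fun i _ => pow_nonneg (by positivity) _)
      have habs : |∑ i ∈ range m, w i * (T:ℤ)^i| ≤ (B:ℤ) * ∑ i ∈ range m, (T:ℤ)^i := by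
        calc |∑ i ∈ range m, w i * (T:ℤ)^i| ≤ ∑ i ∈ range m, |w i * (T:ℤ)^i| :=
              Finset.abs_sum_le_sum_abs _ _
          _ ≤ ∑ i ∈ range m, (B:ℤ) * (T:ℤ)^i := by
              apply Finset.sum_le_sum
              intro i _
              rw [abs_mul, abs_pow, abs_of_nonneg (by positivity : (0:ℤ) ≤ (T:ℤ))]
              apply mul_le_mul_of_nonneg_right _ (by positivity)
              rw [Int.abs_eq_natAbs]
              exact_mod_cast hb i
          _ = (B:ℤ) * ∑ i ∈ range m, (T:ℤ)^i := by rw [Finset.mul_sum]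
      have h2 : 2 * ((B:ℤ) * ∑ i ∈ range m, (T:ℤ)^i) ≤ (T:ℤ)^m - 1 := by
        have : (2*(B:ℤ)) * (∑ i ∈ range m, (T:ℤ)^i) ≤ ((T:ℤ)-1) * (∑ i ∈ range m, (T:ℤ)^i) := by
          apply mul_le_mul_of_nonneg_right _ hgpos
          have : (2*B+1 : ℤ) ≤ T := by exact_mod_cast hT
          linarith
        calc 2 * ((B:ℤ) * ∑ i ∈ range m, (T:ℤ)^i) = (2*(B:ℤ)) * ∑ i ∈ range m, (T:ℤ)^i := by ring
          _ ≤ ((T:ℤ)-1) * ∑ i ∈ range m, (T:ℤ)^i := this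
          _ = (T:ℤ)^m - 1 := by rw [mul_comm]; exact hgeom
      have hwm : (T:ℤ)^m ≤ |w m * (T:ℤ)^m| := by
        rw [abs_mul, abs_pow, abs_of_nonneg (by positivity : (0:ℤ) ≤ (T:ℤ))]
        have : (1:ℤ) ≤ |w m| := by
          rcases abs_pos.mpr hm with h
          omega
        nlinarith [pow_nonneg (by positivity : (0:ℤ) ≤ (T:ℤ)) m]
      intro h0
      have : w m * (T:ℤ)^m = -(∑ i ∈ range m, w i * (T:ℤ)^i) := by linarith
      have habs2 : |w m * (T:ℤ)^m| ≤ (B:ℤ) * ∑ i ∈ range m, (T:ℤ)^i := by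
        rw [this, abs_neg]; exact habs
      have hTm0 : (0:ℤ) ≤ (T:ℤ)^m := by positivity
      linarith



open Finset Function

variable {n : ℕ}

abbrev Pat (n : ℕ) := Finset (Fin n → ℤ) × Finset (Fin n → ℤ)

noncomputable def Epat (n : ℕ) : ℕ → Pat n := (exists_surjective_nat (Pat n)).choose

lemma Epat_surj (n : ℕ) : Surjective (Epat n) := (exists_surjective_nat (Pat n)).choose_spec

def matches' (x : Space n) (P : Pat n) : Prop := ∀ w ∈ P.1, x w = decide (w ∈ P.2)

/-- pattern c is good for x (with separation radius b) -/
def Good (b : ℕ) (c : ℕ) (x : Space n) : Prop :=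
  matches' x (Epat n c) ∧ ∀ g, gnorm g ≤ b → g ≠ 0 → ¬ matches' (shift g x) (Epat n c)

noncomputable def fp (b : ℕ) (x : Space n) : ℕ := sInf {c | Good b c x}

lemma good_exists (b : ℕ) {x : Space n} (hx : x ∈ FreePart n) : ∃ c, Good b c x := by
  classical
  have hwit : ∀ g : Fin n → ℤ, g ≠ 0 → ∃ w, x (g + w) ≠ x w := by
    intro g hg
    have := hx g hg
    rw [Function.ne_iff] at this
    obtain ⟨w, hw⟩ := this
    exact ⟨w, hw⟩
  set wit : (Fin n → ℤ) → (Fin n → ℤ) := fun g =>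
    if h : g ≠ 0 then (hwit g h).choose else 0 with hwitdef
  set W : Finset (Fin n → ℤ) :=
    ((ballZ n b).erase 0).biUnion (fun g => {wit g, g + wit g}) with hW
  set t : Finset (Fin n → ℤ) := W.filter (fun w => x w = true) with ht
  obtain ⟨c, hc⟩ := Epat_surj n (W, t)
  refine ⟨c, ?_, ?_⟩
  · rw [hc]
    intro w hw
    simp only [ht, Finset.mem_filter]
    by_cases hxw : x w = true
    · simp [hxw, hw]
    · simp only [Bool.not_eq_true] at hxw
      simp [hxw, hw]
  · intro g hgb hg
    rw [hc]
    intro hm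
    have hgW : g ∈ (ballZ n b).erase 0 := by
      rw [Finset.mem_erase]
      exact ⟨hg, mem_ballZ.mpr hgb⟩
    have hwitW : wit g ∈ W := by
      rw [hW]
      apply Finset.mem_biUnion.mpr
      exact ⟨g, hgW, by simp⟩
    have := hm (wit g) hwitW
    have hne : x (g + wit g) ≠ x (wit g) := by
      have h0 : wit g = (hwit g hg).choose := by simp [hwitdef, hg]
      rw [h0]
      exact (hwit g hg).choose_spec
    -- also x (wit g) = decide (wit g ∈ t)
    have h2 : x (wit g) = decide (wit g ∈ t) := by
      simp only [ht, Finset.mem_filter]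
      by_cases hxw : x (wit g) = true
      · simp [hxw, hwitW]
      · simp only [Bool.not_eq_true] at hxw
        simp [hxw]
    apply hne
    have h3 : x (g + wit g) = decide (wit g ∈ t) := hm (wit g) hwitW
    rw [h3, h2]

lemma good_fp (b : ℕ) {x : Space n} (hx : x ∈ FreePart n) : Good b (fp b x) x :=
  Nat.sInf_mem (good_exists b hx)

lemma fp_ne (b : ℕ) {x : Space n} (hx : x ∈ FreePart n) {g : Fin n → ℤ}
    (hg : g ≠ 0) (hgb : gnorm g ≤ b) : fp b (shift g x) ≠ fp b x := by
  intro he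
  have h1 := good_fp b hx
  have h2 := good_fp b (freePart_shift hx g)
  rw [he] at h2
  exact h1.2 g hgb hg h2.1

/-! ### determination of fp -/

noncomputable def fdep (b : ℕ) (x : Space n) : Finset (Fin n → ℤ) :=
  (Finset.range (fp b x + 1)).biUnion (fun c =>
    (Epat n c).1 ∪ (ballZ n b).biUnion (fun g => (Epat n c).1.image (fun w => g + w)))

lemma fp_det (b : ℕ) {x : Space n} (hx : x ∈ FreePart n) {y : Space n}
    (hagree : ∀ w ∈ fdep b x, y w = x w) : fp b y = fp b x := by
  have key : ∀ c ≤ fp b x, (Good b c y ↔ Good b c x) := by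
    intro c hc
    have hcr : c ∈ Finset.range (fp b x + 1) := Finset.mem_range.mpr (by omega)
    have hag1 : ∀ w ∈ (Epat n c).1, y w = x w := by
      intro w hw
      apply hagree
      apply Finset.mem_biUnion.mpr
      exact ⟨c, hcr, Finset.mem_union_left _ hw⟩
    have hag2 : ∀ g, gnorm g ≤ b → ∀ w ∈ (Epat n c).1, y (g + w) = x (g + w) := by
      intro g hgb w hw
      apply hagree
      apply Finset.mem_biUnion.mpr
      refine ⟨c, hcr, Finset.mem_union_right _ ?_⟩
      apply Finset.mem_biUnion.mpr
      exact ⟨g, mem_ballZ.mpr hgb, Finset.mem_image.mpr ⟨w, hw, rfl⟩⟩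
    unfold Good
    have m1 : matches' y (Epat n c) ↔ matches' x (Epat n c) := by
      unfold matches'
      constructor <;> intro h w hw
      · rw [← hag1 w hw]; exact h w hw
      · rw [hag1 w hw]; exact h w hw
    have m2 : ∀ g, gnorm g ≤ b →
        (matches' (shift g y) (Epat n c) ↔ matches' (shift g x) (Epat n c)) := by
      intro g hgb
      unfold matches'
      constructor <;> intro h w hw
      · have : shift g y w = shift g x w := hag2 g hgb w hw
        rw [← this]; exact h w hw
      · have : shift g y w = shift g x w := hag2 g hgb w hw
        rw [this]; exact h w hw
    constructor
    · rintro ⟨h1, h2⟩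
      refine ⟨m1.mp h1, fun g hgb hg hm => h2 g hgb hg ((m2 g hgb).mpr hm)⟩
    · rintro ⟨h1, h2⟩
      refine ⟨m1.mpr h1, fun g hgb hg hm => h2 g hgb hg ((m2 g hgb).mp hm)⟩
  have hgy : Good b (fp b x) y := (key _ le_rfl).mpr (good_fp b hx)
  have h1 : fp b y ≤ fp b x := Nat.sInf_le hgy
  have hyy : Good b (fp b y) y := Nat.sInf_mem (⟨_, hgy⟩ : {c | Good b c y}.Nonempty)
  have h2 : fp b x ≤ fp b y := Nat.sInf_le ((key _ h1).mp hyy)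
  omega

/-! ### generic priority recursion -/

def Klev (r : Space n → ℕ) (σ : Space n → Prop) (B : Finset (Fin n → ℤ)) :
    ℕ → Space n → Prop
  | k, x => σ x ∧ ∀ g ∈ B, ∀ (_ : r (shift g x) < k), ¬ Klev r σ B (r (shift g x)) (shift g x)
termination_by k => k

def Kmk (r : Space n → ℕ) (σ : Space n → Prop) (B : Finset (Fin n → ℤ)) (x : Space n) : Prop :=
  Klev r σ B (r x) x

lemma Kmk_def {r : Space n → ℕ} {σ : Space n → Prop} {B : Finset (Fin n → ℤ)} {x : Space n} :
    Kmk r σ B x ↔ σ x ∧ ∀ g ∈ B, r (shift g x) < r x → ¬ Kmk r σ B (shift g x) := by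
  unfold Kmk
  rw [Klev]

lemma Kmk_sep {r : Space n → ℕ} {σ : Space n → Prop} {B : Finset (Fin n → ℤ)} {x : Space n}
    {g : Fin n → ℤ} (h1 : Kmk r σ B x) (h2 : Kmk r σ B (shift g x)) (hgB : g ∈ B)
    (hlt : r (shift g x) < r x) : False :=
  (Kmk_def.mp h1).2 g hgB hlt h2

lemma Kmk_escape {r : Space n → ℕ} {B : Finset (Fin n → ℤ)}
    (x : Space n) (hσ : ∀ z : Space n, (fun _ => True) z) :
    ∃ g, (g = 0 ∨ g ∈ B) ∧ Kmk r (fun _ => True) B (shift g x) := by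
  classical
  generalize hk : r x = k
  induction k using Nat.strong_induction_on generalizing x with
  | _ k IH =>
    by_cases hx : Kmk r (fun _ => True) B x
    · exact ⟨0, Or.inl rfl, by rwa [shift_zero]⟩
    · rw [Kmk_def] at hx
      push_neg at hx
      obtain ⟨g, hgB, hlt, hKg⟩ := hx trivial
      exact ⟨g, Or.inr hgB, hKg⟩

lemma Kmk_det {r : Space n → ℕ} {σ : Space n → Prop} {B : Finset (Fin n → ℤ)}
    (hrdet : ∀ x ∈ FreePart n, ∃ W : Finset (Fin n → ℤ),
      ∀ y ∈ FreePart n, (∀ w ∈ W, y w = x w) → r y = r x)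
    (hσdet : ∀ x ∈ FreePart n, ∃ W : Finset (Fin n → ℤ),
      ∀ y ∈ FreePart n, (∀ w ∈ W, y w = x w) → (σ y ↔ σ x)) :
    ∀ x ∈ FreePart n, ∃ W : Finset (Fin n → ℤ),
      ∀ y ∈ FreePart n, (∀ w ∈ W, y w = x w) → (Kmk r σ B y ↔ Kmk r σ B x) := by
  classical
  suffices H : ∀ k, ∀ x ∈ FreePart n, r x = k → ∃ W : Finset (Fin n → ℤ),
      ∀ y ∈ FreePart n, (∀ w ∈ W, y w = x w) → (Kmk r σ B y ↔ Kmk r σ B x) by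
    intro x hx; exact H (r x) x hx rfl
  intro k
  induction k using Nat.strong_induction_on with
  | _ k IH =>
    intro x hx hrx
    choose Wr hWr using hrdet
    choose Wσ hWσ using hσdet
    have HIH : ∀ g : Fin n → ℤ, r (shift g x) < k → ∃ W, ∀ z ∈ FreePart n,
        (∀ w ∈ W, z w = (shift g x) w) → (Kmk r σ B z ↔ Kmk r σ B (shift g x)) :=
      fun g hlt => IH _ hlt (shift g x) (freePart_shift hx g) rfl
    choose WIH hWIH using HIH
    set W : Finset (Fin n → ℤ) :=
      (Wr x hx ∪ Wσ x hx) ∪ B.biUnion (fun g =>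
        ((Wr (shift g x) (freePart_shift hx g)) ∪
          (if h : r (shift g x) < k then WIH g h else ∅)).image (fun w => g + w)) with hWdef
    refine ⟨W, fun y hy hagree => ?_⟩
    have hagr : ∀ w ∈ Wr x hx, y w = x w := fun w hw =>
      hagree w (by rw [hWdef]; exact Finset.mem_union_left _ (Finset.mem_union_left _ hw))
    have hagσ : ∀ w ∈ Wσ x hx, y w = x w := fun w hw =>
      hagree w (by rw [hWdef]; exact Finset.mem_union_left _ (Finset.mem_union_right _ hw))
    have hry : r y = r x := hWr x hx y hy hagr
    have hσy : σ y ↔ σ x := hWσ x hx y hy hagσ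
    have hshift_ag : ∀ g ∈ B, ∀ W' : Finset (Fin n → ℤ),
        (W' ⊆ Wr (shift g x) (freePart_shift hx g) ∪
          (if h : r (shift g x) < k then WIH g h else ∅)) →
        ∀ w ∈ W', (shift g y) w = (shift g x) w := by
      intro g hgB W' hsub w hw
      show y (g + w) = x (g + w)
      apply hagree
      rw [hWdef]
      apply Finset.mem_union_right
      apply Finset.mem_biUnion.mpr
      exact ⟨g, hgB, Finset.mem_image.mpr ⟨w, hsub hw, rfl⟩⟩
    have hrg : ∀ g ∈ B, r (shift g y) = r (shift g x) := by
      intro g hgB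
      exact hWr (shift g x) (freePart_shift hx g) (shift g y) (freePart_shift hy g)
        (hshift_ag g hgB _ Finset.subset_union_left)
    have hKg : ∀ g ∈ B, r (shift g x) < k →
        (Kmk r σ B (shift g y) ↔ Kmk r σ B (shift g x)) := by
      intro g hgB hlt
      apply hWIH g hlt (shift g y) (freePart_shift hy g)
      intro w hw
      refine hshift_ag g hgB _ ?_ w hw
      intro u hu
      apply Finset.mem_union_right
      rw [dif_pos hlt]
      exact hu
    rw [Kmk_def, Kmk_def, hry, hσy]
    constructor
    · rintro ⟨h1, h2⟩
      refine ⟨h1, fun g hgB hlt => ?_⟩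
      have hlt' : r (shift g x) < k := by rw [← hrx]; exact hlt
      intro hKx
      exact h2 g hgB (by rw [hrg g hgB]; exact hlt) ((hKg g hgB hlt').mpr hKx)
    · rintro ⟨h1, h2⟩
      refine ⟨h1, fun g hgB hlt => ?_⟩
      have hlt2 : r (shift g x) < r x := by rw [← hrg g hgB]; exact hlt
      have hlt' : r (shift g x) < k := by rw [← hrx]; exact hlt2
      intro hKy
      exact h2 g hgB hlt2 ((hKg g hgB hlt').mp hKy)



def lineN (T : ℕ) (v s : Fin n → ℤ) (k : ℕ) : ℕ :=
  ∑ i : Fin n, T^(i:ℕ) * ((v - (k:ℤ) • s) i).natAbs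

/-- general shell-crossing count along a line -/
lemma shell_count_gen (T E A m0 : ℕ) (hT : 2*m0+1 ≤ T) (v s : Fin n → ℤ)
    (hs : s ≠ 0) (hsm : gnorm s ≤ m0) (K : ℕ) :
    ((Finset.range K).filter (fun k =>
      A < lineN T v s k ∧ lineN T v s k ≤ A + 2*E)).card ≤ (n+1)*(2*E+2) := by
  classical
  set q : ℕ → ℕ := lineN T v s with hq
  set P : Fin n → ℕ → Prop := fun i k => 0 ≤ v i - (k:ℤ) * s i with hP
  have flip : ∀ (i : Fin n) (k k' k'' : ℕ), k ≤ k' → k' ≤ k'' →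
      (P i k ↔ P i k'') → (P i k' ↔ P i k) := by
    intro i k k' k'' h1 h2 hiff
    simp only [hP] at hiff ⊢
    rcases le_or_gt 0 (s i) with hpos | hneg
    · have m1 : (k:ℤ) * s i ≤ (k':ℤ) * s i :=
        mul_le_mul_of_nonneg_right (by exact_mod_cast h1) hpos
      have m2 : (k':ℤ) * s i ≤ (k'':ℤ) * s i :=
        mul_le_mul_of_nonneg_right (by exact_mod_cast h2) hpos
      omega
    · have m1 : (k':ℤ) * s i ≤ (k:ℤ) * s i :=
        mul_le_mul_of_nonpos_right (by exact_mod_cast h1) hneg.le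
      have m2 : (k'':ℤ) * s i ≤ (k':ℤ) * s i :=
        mul_le_mul_of_nonpos_right (by exact_mod_cast h2) hneg.le
      omega
  set Sf : ℕ → Finset (Fin n) := fun k => univ.filter (fun i => ¬ (P i k ↔ P i 0)) with hSf
  have Ssub : ∀ k k', k ≤ k' → Sf k ⊆ Sf k' := by
    intro k k' hkk' i hi
    simp only [hSf, Finset.mem_filter, Finset.mem_univ, true_and] at hi ⊢
    intro hiff
    exact hi ((flip i 0 k k' (Nat.zero_le _) hkk') (by tauto))
  set phi : ℕ → ℕ := fun k => (Sf k).card with hphi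
  have phile : ∀ k, phi k ≤ n := by
    intro k
    simp only [hphi]
    calc (Sf k).card ≤ (univ : Finset (Fin n)).card := Finset.card_le_card (by simp [hSf])
      _ = n := by simp
  have samefiber : ∀ k k', k ≤ k' → phi k = phi k' → ∀ i, (P i k ↔ P i k') := by
    intro k k' hkk' hph i
    have hSeq : Sf k = Sf k' :=
      Finset.eq_of_subset_of_card_le (Ssub k k' hkk') (le_of_eq hph.symm)
    by_cases hi : i ∈ Sf k
    · have hi' : i ∈ Sf k' := hSeq ▸ hi
      simp only [hSf, Finset.mem_filter, Finset.mem_univ, true_and] at hi hi'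
      tauto
    · have hi' : i ∉ Sf k' := fun h => hi (hSeq ▸ h)
      simp only [hSf, Finset.mem_filter, Finset.mem_univ, true_and, not_not] at hi hi'
      tauto
  have qdiff : ∀ k k', (∀ i, (P i k ↔ P i k')) → k ≤ k' →
      ((k':ℤ) - k) ≤ |(q k' : ℤ) - (q k : ℤ)| := by
    intro k k' hfib hkk'
    set eps : Fin n → ℤ := fun i => if P i k then 1 else -1 with heps
    have hqz : ∀ j : ℕ, (∀ i, (P i j ↔ P i k)) →
        ((q j : ℤ)) = ∑ i : Fin n, (T:ℤ)^(i:ℕ) * (eps i * (v i - (j:ℤ) * s i)) := by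
      intro j hj
      simp only [hq, lineN]
      push_cast
      apply Finset.sum_congr rfl
      intro i _
      have hvi : (v - (j:ℤ) • s) i = v i - (j:ℤ) * s i := rfl
      by_cases hp : P i k
      · have hpj : P i j := (hj i).mpr hp
        simp only [hP] at hpj
        rw [heps]
        simp only [if_pos hp]
        rw [hvi, abs_of_nonneg hpj]
        ring
      · have hpj : ¬ P i j := fun hc => hp ((hj i).mp hc)
        simp only [hP, not_le] at hpj
        rw [heps]
        simp only [if_neg hp]
        rw [hvi, abs_of_nonpos hpj.le]
        ring
    have e1 := hqz k (fun i => Iff.rfl)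
    have e2 := hqz k' (fun i => (hfib i).symm)
    set sig : ℤ := ∑ i : Fin n, (T:ℤ)^(i:ℕ) * (eps i * s i) with hsig
    have ediff : (q k : ℤ) - (q k' : ℤ) = ((k':ℤ) - k) * sig := by
      rw [e1, e2, hsig, ← Finset.sum_sub_distrib, Finset.mul_sum]
      apply Finset.sum_congr rfl
      intro i _
      ring
    have hsigne : sig ≠ 0 := by
      rw [hsig]
      set w : ℕ → ℤ := fun i => if h : i < n then eps ⟨i,h⟩ * s ⟨i,h⟩ else 0 with hw
      have hrw : (∑ i : Fin n, (T:ℤ)^(i:ℕ) * (eps i * s i)) = ∑ i ∈ Finset.range n, w i * (T:ℤ)^i := by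
        rw [← Fin.sum_univ_eq_sum_range (fun i => w i * (T:ℤ)^i) n]
        apply Finset.sum_congr rfl
        intro i _
        simp only [hw, i.isLt, dif_pos, Fin.eta]
        ring
      rw [hrw]
      apply digit_ne_zero (B := m0) hT
      · intro i
        by_cases h : i < n
        · simp only [hw, dif_pos h]
          rw [Int.natAbs_mul]
          have he : (eps ⟨i,h⟩).natAbs = 1 := by
            rw [heps]
            by_cases hp : P ⟨i,h⟩ k <;> simp [hp]
          rw [he, one_mul]
          exact le_trans (Finset.le_sup (f := fun j => (s j).natAbs) (Finset.mem_univ _)) hsm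
        · simp [hw, h]
      · obtain ⟨j, hj⟩ : ∃ j, s j ≠ 0 := by
          by_contra hq0
          push_neg at hq0
          exact hs (funext hq0)
        refine ⟨j, j.isLt, ?_⟩
        simp only [hw, j.isLt, dif_pos, Fin.eta]
        intro hc
        rcases mul_eq_zero.mp hc with h | h
        · rw [heps] at h
          by_cases hp : P j k <;> simp [hp] at h
        · exact hj h
    have habs : |(q k' : ℤ) - q k| = ((k':ℤ) - k) * |sig| := by
      have e3 : (q k' : ℤ) - q k = -((q k : ℤ) - q k') := by ring
      rw [e3, abs_neg, ediff, abs_mul]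
      congr 1
      rw [abs_of_nonneg]
      have : (k:ℤ) ≤ (k':ℤ) := by exact_mod_cast hkk'
      omega
    rw [habs]
    have h1 : (1:ℤ) ≤ |sig| := Int.one_le_abs (by exact_mod_cast hsigne)
    have h2 : (0:ℤ) ≤ (k':ℤ) - k := by
      have : (k:ℤ) ≤ (k':ℤ) := by exact_mod_cast hkk'
      omega
    nlinarith
  set F : Finset ℕ := (Finset.range K).filter (fun k => A < q k ∧ q k ≤ A + 2*E) with hF
  show F.card ≤ (n+1)*(2*E+2)
  have hFsub : F ⊆ (Finset.range (n+1)).biUnion (fun j => F.filter (fun k => phi k = j)) := by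
    intro k hk
    apply Finset.mem_biUnion.mpr
    exact ⟨phi k, Finset.mem_range.mpr (by have := phile k; omega),
      Finset.mem_filter.mpr ⟨hk, rfl⟩⟩
  have hcard : F.card ≤ ∑ j ∈ Finset.range (n+1), (F.filter (fun k => phi k = j)).card :=
    le_trans (Finset.card_le_card hFsub) Finset.card_biUnion_le
  have hfib2 : ∀ j, (F.filter (fun k => phi k = j)).card ≤ 2*E+2 := by
    intro j
    set G := F.filter (fun k => phi k = j) with hG
    by_cases hne : G.Nonempty
    · set a := G.min' hne with ha
      have haG : a ∈ G := Finset.min'_mem _ _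
      have hbound : ∀ k ∈ G, k ≤ a + 2*E := by
        intro k hk
        have hak : a ≤ k := Finset.min'_le _ _ hk
        have hphik : phi a = phi k := by
          have g1 : phi a = j := (Finset.mem_filter.mp haG).2
          have g2 : phi k = j := (Finset.mem_filter.mp hk).2
          rw [g1, g2]
        have hfb := samefiber a k hak hphik
        have hqd := qdiff a k hfb hak
        have hqa := (Finset.mem_filter.mp (Finset.mem_filter.mp haG).1).2
        have hqk := (Finset.mem_filter.mp (Finset.mem_filter.mp hk).1).2
        have habs2 : |(q k : ℤ) - q a| ≤ 2*E := by
          obtain ⟨c1, c2⟩ := hqa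
          obtain ⟨c3, c4⟩ := hqk
          rw [abs_le]
          omega
        have hfin : ((k:ℤ) - a) ≤ 2*E := le_trans hqd habs2
        have : (a:ℤ) ≤ k := by exact_mod_cast hak
        omega
      have hsubI : G ⊆ Finset.Icc a (a + 2*E) := fun k hk =>
        Finset.mem_Icc.mpr ⟨Finset.min'_le _ _ hk, hbound k hk⟩
      calc G.card ≤ (Finset.Icc a (a+2*E)).card := Finset.card_le_card hsubI
        _ = 2*E + 1 := by rw [Nat.card_Icc]; omega
        _ ≤ 2*E + 2 := by omega
    · rw [Finset.not_nonempty_iff_eq_empty] at hne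
      rw [hne]
      simp
  calc F.card ≤ ∑ j ∈ Finset.range (n+1), (F.filter (fun k => phi k = j)).card := hcard
    _ ≤ ∑ _j ∈ Finset.range (n+1), (2*E+2) := Finset.sum_le_sum (fun j _ => hfib2 j)
    _ = (n+1)*(2*E+2) := by rw [Finset.sum_const, Finset.card_range]; ring


lemma gnorm_smul_le (k : ℕ) (s : Fin n → ℤ) : gnorm ((k:ℤ) • s) ≤ k * gnorm s := by
  apply gnorm_le_iff.mpr
  intro i
  have : ((k:ℤ) • s) i = (k:ℤ) * s i := rfl
  rw [this, Int.natAbs_mul]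
  simp only [Int.natAbs_natCast]
  exact Nat.mul_le_mul_left k (natAbs_le_gnorm s i)

lemma sep_count (ρ Qh : ℕ) (Sset : Finset (Fin n → ℤ)) (hsub : Sset ⊆ ballZ n ρ)
    (hsep : ∀ v ∈ Sset, ∀ v' ∈ Sset, v ≠ v' → Qh + 1 ≤ gnorm (v - v')) :
    Sset.card ≤ (2*ρ/(Qh+1) + 1)^n := by
  classical
  set φ : (Fin n → ℤ) → (Fin n → ℕ) := fun v i => (v i + ρ).toNat / (Qh+1) with hφ
  have hmaps : ∀ v ∈ Sset, φ v ∈ Fintype.piFinset (fun _ : Fin n => Finset.range (2*ρ/(Qh+1) + 1)) := by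
    intro v hv
    rw [Fintype.mem_piFinset]
    intro i
    rw [Finset.mem_range]
    simp only [hφ]
    have hvb : (v i).natAbs ≤ ρ := le_trans (natAbs_le_gnorm v i) (mem_ballZ.mp (hsub hv))
    have h1 : (v i + ρ).toNat ≤ 2*ρ := by omega
    have := Nat.div_le_div_right (c := Qh+1) h1
    omega
  have hinj : ∀ v ∈ Sset, ∀ v' ∈ Sset, φ v = φ v' → v = v' := by
    intro v hv v' hv' he
    by_contra hne
    obtain ⟨i, hi⟩ : ∃ i, Qh + 1 ≤ ((v - v') i).natAbs := by
      have := hsep v hv v' hv' hne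
      by_contra hq
      push_neg at hq
      have : gnorm (v - v') ≤ Qh := gnorm_le_iff.mpr (fun i => by have := hq i; omega)
      omega
    have hvb : (v i).natAbs ≤ ρ := le_trans (natAbs_le_gnorm v i) (mem_ballZ.mp (hsub hv))
    have hvb' : (v' i).natAbs ≤ ρ := le_trans (natAbs_le_gnorm v' i) (mem_ballZ.mp (hsub hv'))
    have hei : (v i + ρ).toNat / (Qh+1) = (v' i + ρ).toNat / (Qh+1) := congrFun he i
    have hsubi : ((v - v') i) = v i - v' i := rfl
    rw [hsubi] at hi
    set a := (v i + ρ).toNat with haa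
    set b := (v' i + ρ).toNat with hbb
    have ha : (a : ℤ) = v i + ρ := by rw [haa]; omega
    have hb : (b : ℤ) = v' i + ρ := by rw [hbb]; omega
    have : a / (Qh+1) = b / (Qh+1) := hei
    have hd2 : a < b + (Qh+1) ∧ b < a + (Qh+1) := by
      constructor
      · by_contra hc
        push_neg at hc
        have := Nat.div_le_div_right (c := Qh+1) hc
        rw [Nat.add_div_right _ (by omega : 0 < Qh+1)] at this
        omega
      · by_contra hc
        push_neg at hc
        have := Nat.div_le_div_right (c := Qh+1) hc
        rw [Nat.add_div_right _ (by omega : 0 < Qh+1)] at this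
        omega
    omega
  calc Sset.card ≤ (Fintype.piFinset (fun _ : Fin n => Finset.range (2*ρ/(Qh+1) + 1))).card :=
        Finset.card_le_card_of_injOn φ hmaps hinj
    _ = (2*ρ/(Qh+1) + 1)^n := by
        rw [Fintype.card_piFinset]
        simp

lemma open_of_det {P : Space n → Prop}
    (hdet : ∀ x ∈ FreePart n, ∃ W : Finset (Fin n → ℤ), ∀ y ∈ FreePart n,
      (∀ w ∈ W, y w = x w) → (P y ↔ P x)) :
    IsOpen {x : FreePart n | P (x : Space n)} := by
  rw [isOpen_iff_forall_mem_open]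
  intro x hxA
  obtain ⟨W, hW⟩ := hdet ↑x x.2
  refine ⟨Subtype.val ⁻¹' {y : Space n | ∀ w ∈ W, y w = (x : Space n) w}, ?_, ?_, ?_⟩
  · intro y hy
    exact (hW ↑y y.2 hy).mpr hxA
  · apply IsOpen.preimage continuous_subtype_val
    have he : {y : Space n | ∀ w ∈ W, y w = (x : Space n) w}
        = ⋂ w ∈ W, {y : Space n | y w = (x : Space n) w} := by
      ext z
      simp
    rw [he]
    apply isOpen_biInter_finset
    intro w _
    have he2 : {y : Space n | y w = (x : Space n) w}
        = (fun y : Space n => y w) ⁻¹' {(x : Space n) w} := rfl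
    rw [he2]
    exact IsOpen.preimage (continuous_apply w) (isOpen_discrete _)
  · intro w hw
    rfl

lemma clopen_of_det {P : Space n → Prop}
    (hdet : ∀ x ∈ FreePart n, ∃ W : Finset (Fin n → ℤ), ∀ y ∈ FreePart n,
      (∀ w ∈ W, y w = x w) → (P y ↔ P x)) :
    IsClopen {x : FreePart n | P (x : Space n)} := by
  constructor
  · rw [← isOpen_compl_iff]
    have he : {x : FreePart n | P (x : Space n)}ᶜ = {x : FreePart n | ¬ P (x : Space n)} := by
      ext z
      simp
    rw [he]
    exact open_of_det (P := fun z => ¬ P z) (fun x hx =>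
      (hdet x hx).imp (fun W hW => fun y hy hag => not_congr (hW y hy hag)))
  · exact open_of_det hdet

section Consts
variable (n d m0 : ℕ)


def Tc : ℕ := 2*d + 2*m0 + 2*n + 10
def CN : ℕ := ∑ i ∈ range n, (Tc n d m0)^i
def Nn (g : Fin n → ℤ) : ℕ := ∑ i : Fin n, (Tc n d m0)^(i:ℕ) * (g i).natAbs

lemma Tc_pos : 0 < Tc n d m0 := by unfold Tc; omega
lemma CN_pos (hn : 0 < n) : 0 < CN n d m0 := by
  unfold CN
  apply Finset.sum_pos
  · intro i _; exact pow_pos (Tc_pos n d m0) i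
  · exact ⟨0, by simpa using hn⟩


lemma Nn_zero : Nn n d m0 0 = 0 := by simp [Nn]

lemma gnorm_le_Nn (g : Fin n → ℤ) : gnorm g ≤ Nn n d m0 g := by
  apply Finset.sup_le
  intro i _
  calc (g i).natAbs ≤ (Tc n d m0)^(i:ℕ) * (g i).natAbs :=
        Nat.le_mul_of_pos_left _ (pow_pos (Tc_pos n d m0) _)
    _ ≤ _ := Finset.single_le_sum (f := fun j : Fin n => (Tc n d m0)^(j:ℕ) * (g j).natAbs)
        (fun j _ => Nat.zero_le _) (Finset.mem_univ i)

lemma Nn_le (g : Fin n → ℤ) : Nn n d m0 g ≤ CN n d m0 * gnorm g := by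
  unfold Nn CN
  rw [Finset.sum_mul]
  rw [← Fin.sum_univ_eq_sum_range (fun i => (Tc n d m0)^i * gnorm g) n]
  apply Finset.sum_le_sum
  intro i _
  exact Nat.mul_le_mul_left _ (Finset.le_sup (f := fun j => (g j).natAbs) (Finset.mem_univ i))

lemma Nn_add_le (a b : Fin n → ℤ) : Nn n d m0 (a + b) ≤ Nn n d m0 a + Nn n d m0 b := by
  unfold Nn
  rw [← Finset.sum_add_distrib]
  apply Finset.sum_le_sum
  intro i _
  have : ((a + b) i).natAbs ≤ (a i).natAbs + (b i).natAbs := by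
    simpa using Int.natAbs_add_le (a i) (b i)
  calc (Tc n d m0)^(i:ℕ) * ((a+b) i).natAbs ≤ (Tc n d m0)^(i:ℕ) * ((a i).natAbs + (b i).natAbs) :=
        Nat.mul_le_mul_left _ this
    _ = _ := by ring

lemma Nn_neg (a : Fin n → ℤ) : Nn n d m0 (-a) = Nn n d m0 a := by
  unfold Nn; congr 1; funext i; simp

noncomputable def pc : ℕ := (Nat.exists_infinite_primes ((d+m0+2)*(CN n d m0)+1)).choose

lemma pc_prime : (pc n d m0).Prime := (Nat.exists_infinite_primes _).choose_spec.2
lemma pc_gt : (d+m0+2)*(CN n d m0)+1 ≤ pc n d m0 := (Nat.exists_infinite_primes _).choose_spec.1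

noncomputable def Ec : ℕ := (CN n d m0) * (d + ((pc n d m0)+1)*m0)
noncomputable def tau : ℕ := (n+1)*(2*(Ec n d m0) + 2)
noncomputable def gam : ℕ := (4*(CN n d m0)+4)^n
noncomputable def Lc : ℕ := ((pc n d m0)+1)*((gam n d m0)*(tau n d m0)+2)
noncomputable def Qhat : ℕ := d + (Lc n d m0)*(m0+1) + 10
noncomputable def Qc : ℕ := (CN n d m0) * (Qhat n d m0)
noncomputable def Brad : ℕ := 2*(Qc n d m0) + 2*d + 10

/-- the character ψ mod p -/
noncomputable def psi (g : Fin n → ℤ) : ZMod (pc n d m0) :=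
  ∑ i : Fin n, (g i : ZMod (pc n d m0)) * ((Tc n d m0 : ZMod (pc n d m0)))^(i:ℕ)

lemma psi_add (a b : Fin n → ℤ) : psi n d m0 (a + b) = psi n d m0 a + psi n d m0 b := by
  unfold psi
  rw [← Finset.sum_add_distrib]
  congr 1; funext i
  push_cast [Pi.add_apply]
  ring

lemma psi_neg (a : Fin n → ℤ) : psi n d m0 (-a) = - psi n d m0 a := by
  unfold psi
  rw [← Finset.sum_neg_distrib]
  congr 1; funext i
  push_cast [Pi.neg_apply]
  ring

lemma psi_intsmul (k : ℤ) (s : Fin n → ℤ) : psi n d m0 (k • s) = (k : ZMod (pc n d m0)) * psi n d m0 s := by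
  unfold psi
  rw [Finset.mul_sum]
  congr 1; funext i
  have : (k • s) i = k * s i := rfl
  rw [this]
  push_cast
  ring

/-- ψ as cast of an integer -/
lemma psi_eq_cast (g : Fin n → ℤ) :
    psi n d m0 g = ((∑ i : Fin n, g i * ((Tc n d m0 : ℤ))^(i:ℕ) : ℤ) : ZMod (pc n d m0)) := by
  unfold psi
  push_cast
  rfl

/-- key: small vectors with ψ = 0 vanish -/
lemma psi_zero_small {g : Fin n → ℤ} {B : ℕ} (hB : gnorm g ≤ B) (hBd : B ≤ d + m0 + 1)
    (h0 : psi n d m0 g = 0) : g = 0 := by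
  by_contra hg
  -- the integer
  set Z : ℤ := ∑ i : Fin n, g i * ((Tc n d m0 : ℤ))^(i:ℕ) with hZ
  have hdvd : ((pc n d m0 : ℤ)) ∣ Z := by
    rw [psi_eq_cast] at h0
    exact (ZMod.intCast_zmod_eq_zero_iff_dvd _ _).mp h0
  -- bound |Z|
  have hZbound : |Z| < (pc n d m0 : ℤ) := by
    have h1 : |Z| ≤ (Nn n d m0 g : ℤ) := by
      rw [hZ]
      calc |∑ i : Fin n, g i * ((Tc n d m0 : ℤ))^(i:ℕ)|
          ≤ ∑ i : Fin n, |g i * ((Tc n d m0 : ℤ))^(i:ℕ)| := Finset.abs_sum_le_sum_abs _ _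
        _ ≤ (Nn n d m0 g : ℤ) := by
            unfold Nn
            push_cast
            apply Finset.sum_le_sum
            intro i _
            rw [abs_mul, abs_pow, abs_of_nonneg (by positivity : (0:ℤ) ≤ ((Tc n d m0 : ℤ)))]
            rw [Int.abs_eq_natAbs]
            push_cast
            ring_nf
            exact le_refl _
    have h2 : (Nn n d m0 g : ℤ) ≤ ((CN n d m0 * B : ℕ) : ℤ) := by
      exact_mod_cast le_trans (Nn_le n d m0 g) (Nat.mul_le_mul_left _ hB)
    have h3 : (CN n d m0) * B < pc n d m0 := by
      have := pc_gt n d m0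
      have hb2 : (CN n d m0) * B ≤ (CN n d m0) * (d + m0 + 1) := Nat.mul_le_mul_left _ hBd
      have : (CN n d m0) * (d+m0+1) < (d+m0+2)*(CN n d m0)+1 := by nlinarith
      omega
    have h3' : ((CN n d m0 * B : ℕ) : ℤ) < (pc n d m0 : ℤ) := by exact_mod_cast h3
    linarith
  have hZ0 : Z = 0 := Int.eq_zero_of_abs_lt_dvd hdvd hZbound
  -- digit lemma
  obtain ⟨j, hj⟩ : ∃ j : Fin n, g j ≠ 0 := by
    by_contra hq
    push_neg at hq
    exact hg (funext fun i => hq i)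
  have : Z ≠ 0 := by
    rw [hZ]
    classical
    set w : ℕ → ℤ := fun i => if h : i < n then g ⟨i, h⟩ else 0 with hw
    have hrw : (∑ i : Fin n, g i * ((Tc n d m0 : ℤ))^(i:ℕ))
        = ∑ i ∈ Finset.range n, w i * ((Tc n d m0 : ℤ))^i := by
      rw [← Fin.sum_univ_eq_sum_range (fun i => w i * ((Tc n d m0 : ℤ))^i) n]
      congr 1; funext i
      simp [hw, i.isLt]
    rw [hrw]
    apply digit_ne_zero (B := B)
    · unfold Tc; omega
    · intro i
      by_cases h : i < n
      · simp only [hw, dif_pos h]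
        calc (g ⟨i,h⟩).natAbs ≤ gnorm g := Finset.le_sup (f := fun j => (g j).natAbs) (Finset.mem_univ _)
          _ ≤ B := hB
      · simp [hw, h]
    · exact ⟨j, j.isLt, by simp [hw, j.isLt, hj]⟩
  exact this hZ0


/-! ### markers and owners -/

open scoped Classical in
noncomputable def BQ : Finset (Fin n → ℤ) :=
  (ballZ n (Qc n d m0)).filter (fun g => Nn n d m0 g ≤ Qc n d m0)

lemma mem_BQ {g : Fin n → ℤ} : g ∈ BQ n d m0 ↔ Nn n d m0 g ≤ Qc n d m0 := by
  classical
  simp only [BQ, Finset.mem_filter, mem_ballZ]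
  constructor
  · rintro ⟨-, h⟩; exact h
  · intro h; exact ⟨le_trans (gnorm_le_Nn n d m0 g) h, h⟩

noncomputable def Rm (x : Space n) : Prop :=
  Kmk (fp (Brad n d m0)) (fun _ => True) (BQ n d m0) x

lemma Qc_le_Brad : Qc n d m0 ≤ Brad n d m0 := by unfold Brad; omega

lemma Rm_escape (x : Space n) :
    ∃ g, Nn n d m0 g ≤ Qc n d m0 ∧ Rm n d m0 (shift g x) := by
  obtain ⟨g, hg, hK⟩ := Kmk_escape (r := fp (Brad n d m0)) (B := BQ n d m0) x (fun _ => trivial)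
  refine ⟨g, ?_, hK⟩
  rcases hg with h | h
  · rw [h, Nn_zero]; exact Nat.zero_le _
  · exact (mem_BQ n d m0).mp h

lemma Rm_sep {x : Space n} (hx : x ∈ FreePart n) {g : Fin n → ℤ} (hg : g ≠ 0)
    (hNg : Nn n d m0 g ≤ Qc n d m0) (h1 : Rm n d m0 x) (h2 : Rm n d m0 (shift g x)) : False := by
  have hgnorm : gnorm g ≤ Brad n d m0 :=
    le_trans (le_trans (gnorm_le_Nn n d m0 g) hNg) (Qc_le_Brad n d m0)
  have hne := fp_ne (Brad n d m0) hx hg hgnorm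
  rcases Nat.lt_or_ge (fp (Brad n d m0) (shift g x)) (fp (Brad n d m0) x) with hlt | hge
  · exact Kmk_sep h1 h2 ((mem_BQ n d m0).mpr hNg) hlt
  · have hlt2 : fp (Brad n d m0) x < fp (Brad n d m0) (shift g x) := by omega
    have hx' : shift (-g) (shift g x) = x := by
      rw [shift_shift, add_neg_cancel, shift_zero]
    have hNg' : Nn n d m0 (-g) ≤ Qc n d m0 := by rw [Nn_neg]; exact hNg
    apply Kmk_sep h2 (g := -g) ?_ ((mem_BQ n d m0).mpr hNg') ?_
    · rw [hx']; exact h1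
    · rw [hx']; exact hlt2

open scoped Classical in
noncomputable def cands (x : Space n) : Finset (Fin n → ℤ) :=
  (BQ n d m0).filter (fun g => Rm n d m0 (shift g x))

lemma mem_cands {x : Space n} {g : Fin n → ℤ} :
    g ∈ cands n d m0 x ↔ Nn n d m0 g ≤ Qc n d m0 ∧ Rm n d m0 (shift g x) := by
  classical
  simp only [cands]
  rw [Finset.mem_filter, mem_BQ]

lemma cands_nonempty (x : Space n) : (cands n d m0 x).Nonempty := by
  obtain ⟨g, h1, h2⟩ := Rm_escape n d m0 x
  exact ⟨g, (mem_cands n d m0).mpr ⟨h1, h2⟩⟩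

noncomputable def fOwn (x : Space n) : ℕ :=
  ((cands n d m0 x).image (fun g => fp (Brad n d m0) (shift g x))).min'
    ((cands_nonempty n d m0 x).image _)

lemma fOwn_le {x : Space n} {g : Fin n → ℤ} (hg : g ∈ cands n d m0 x) :
    fOwn n d m0 x ≤ fp (Brad n d m0) (shift g x) :=
  Finset.min'_le _ _ (Finset.mem_image.mpr ⟨g, hg, rfl⟩)

lemma fOwn_exists (x : Space n) :
    ∃ g ∈ cands n d m0 x, fp (Brad n d m0) (shift g x) = fOwn n d m0 x := by
  have := Finset.min'_mem ((cands n d m0 x).image (fun g => fp (Brad n d m0) (shift g x)))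
    ((cands_nonempty n d m0 x).image _)
  obtain ⟨g, hg, he⟩ := Finset.mem_image.mp this
  exact ⟨g, hg, he⟩

/-- distinct candidate positions have distinct priorities -/
lemma cands_fp_inj {x : Space n} (hx : x ∈ FreePart n) {g g' : Fin n → ℤ}
    (hg : g ∈ cands n d m0 x) (hg' : g' ∈ cands n d m0 x)
    (he : fp (Brad n d m0) (shift g x) = fp (Brad n d m0) (shift g' x)) : g = g' := by
  by_contra hne
  have h1 : gnorm g ≤ Qc n d m0 :=
    le_trans (gnorm_le_Nn n d m0 g) ((mem_cands n d m0).mp hg).1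
  have h2 : gnorm g' ≤ Qc n d m0 :=
    le_trans (gnorm_le_Nn n d m0 g') ((mem_cands n d m0).mp hg').1
  have hsub : gnorm (g' - g) ≤ Brad n d m0 := by
    have : ∀ i, ((g' - g) i).natAbs ≤ 2 * Qc n d m0 := by
      intro i
      have e1 : (g i).natAbs ≤ Qc n d m0 := le_trans (natAbs_le_gnorm g i) h1
      have e2 : (g' i).natAbs ≤ Qc n d m0 := le_trans (natAbs_le_gnorm g' i) h2
      have : (g' - g) i = g' i - g i := rfl
      rw [this]
      omega
    have hb : gnorm (g' - g) ≤ 2 * Qc n d m0 := gnorm_le_iff.mpr this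
    unfold Brad
    omega
  have hne2 : g' - g ≠ 0 := sub_ne_zero.mpr (Ne.symm hne)
  have hcomp : shift (g' - g) (shift g x) = shift g' x := by
    rw [shift_shift]
    congr 1
    funext i
    simp [Pi.sub_apply]
  have hne3 := fp_ne (Brad n d m0) (freePart_shift hx g) hne2 hsub
  rw [hcomp] at hne3
  exact hne3 he.symm

open scoped Classical in
noncomputable def ownv (x : Space n) : Fin n → ℤ :=
  if h : ∃ g, g ∈ cands n d m0 x ∧ fp (Brad n d m0) (shift g x) = fOwn n d m0 x
  then h.choose else 0

lemma ownv_spec (x : Space n) :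
    ownv n d m0 x ∈ cands n d m0 x ∧
      fp (Brad n d m0) (shift (ownv n d m0 x) x) = fOwn n d m0 x := by
  obtain ⟨g, hg, he⟩ := fOwn_exists n d m0 x
  have hex : ∃ g, g ∈ cands n d m0 x ∧ fp (Brad n d m0) (shift g x) = fOwn n d m0 x := ⟨g, hg, he⟩
  rw [ownv, dif_pos hex]
  exact hex.choose_spec

lemma ownv_unique {x : Space n} (hx : x ∈ FreePart n) {g : Fin n → ℤ}
    (hg : g ∈ cands n d m0 x) (he : fp (Brad n d m0) (shift g x) = fOwn n d m0 x) :
    g = ownv n d m0 x := by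
  have h := ownv_spec n d m0 x
  exact cands_fp_inj n d m0 hx hg h.1 (by rw [he, h.2])

/-! ### the final marker set -/

noncomputable def keptP (x : Space n) : Prop :=
  Kmk (fOwn n d m0) (fun z => psi n d m0 (ownv n d m0 z) = 0) (ballZ n d) x

noncomputable def Mset : Set (Space n) :=
  {x | x ∈ FreePart n ∧ keptP n d m0 x}

/-! ### separation -/

lemma gnorm_add_le (a b : Fin n → ℤ) : gnorm (a + b) ≤ gnorm a + gnorm b := by
  apply gnorm_le_iff.mpr
  intro i
  have h1 := natAbs_le_gnorm a i
  have h2 := natAbs_le_gnorm b i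
  have : (a + b) i = a i + b i := rfl
  rw [this]
  omega

lemma gnorm_neg (a : Fin n → ℤ) : gnorm (-a) = gnorm a := by
  unfold gnorm
  congr 1
  funext i
  simp

lemma fOwn_shift (x : Space n) (g : Fin n → ℤ) :
    fOwn n d m0 (shift g x) = fp (Brad n d m0) (shift (g + ownv n d m0 (shift g x)) x) := by
  have h := (ownv_spec n d m0 (shift g x)).2
  rw [← h, shift_shift]

lemma kept_sep {x : Space n} (hx : x ∈ FreePart n) {g : Fin n → ℤ} (hg : g ≠ 0)
    (hgd : gnorm g ≤ d) (h1 : keptP n d m0 x) (h2 : keptP n d m0 (shift g x)) : False := by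
  set o1 := ownv n d m0 x with ho1
  set o2 := ownv n d m0 (shift g x) with ho2
  have hpsi1 : psi n d m0 o1 = 0 := (Kmk_def.mp h1).1
  have hpsi2 : psi n d m0 o2 = 0 := (Kmk_def.mp h2).1
  by_cases hcase : o1 = g + o2
  · -- same absolute owner: lattice separation
    have : g = o1 + (- o2) := by rw [hcase]; abel
    have hpsig : psi n d m0 g = 0 := by
      rw [this, psi_add, psi_neg, hpsi1, hpsi2]
      ring
    exact hg (psi_zero_small n d m0 (B := d) hgd (by omega) hpsig)
  · -- different absolute owners
    unfold keptP at h1 h2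
    have hc1 := (ownv_spec n d m0 x).1
    have hc2 := (ownv_spec n d m0 (shift g x)).1
    have hn1 : gnorm o1 ≤ Qc n d m0 :=
      le_trans (gnorm_le_Nn n d m0 o1) ((mem_cands n d m0).mp hc1).1
    have hn2 : gnorm o2 ≤ Qc n d m0 :=
      le_trans (gnorm_le_Nn n d m0 o2) ((mem_cands n d m0).mp hc2).1
    have hdiff : gnorm ((g + o2) - o1) ≤ Brad n d m0 := by
      have e1 : gnorm (g + o2) ≤ d + Qc n d m0 :=
        le_trans (gnorm_add_le n g o2) (by omega)
      have h3 := gnorm_add_le n (g + o2) (-o1)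
      rw [gnorm_neg n o1] at h3
      have e2 : (g + o2) - o1 = (g + o2) + (-o1) := by abel
      rw [e2]
      unfold Brad
      omega
    have hdne : (g + o2) - o1 ≠ 0 := fun h => hcase (by
      have : g + o2 = o1 := by
        have := sub_eq_zero.mp h
        exact this
      rw [this])
    have hfne : fOwn n d m0 (shift g x) ≠ fOwn n d m0 x := by
      have hcomp : shift ((g + o2) - o1) (shift o1 x) = shift (g + o2) x := by
        rw [shift_shift]
        congr 1
        abel
      have := fp_ne (Brad n d m0) (freePart_shift hx o1) hdne hdiff
      rw [hcomp] at this
      rw [fOwn_shift]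
      have hfo1 : fOwn n d m0 x = fp (Brad n d m0) (shift o1 x) := (ownv_spec n d m0 x).2.symm
      rw [hfo1]
      exact this
    have hgball : g ∈ ballZ n d := mem_ballZ.mpr hgd
    rcases Nat.lt_or_ge (fOwn n d m0 (shift g x)) (fOwn n d m0 x) with hlt | hge
    · exact Kmk_sep h1 h2 hgball hlt
    · have hlt2 : fOwn n d m0 x < fOwn n d m0 (shift g x) := by
        omega
      have hx' : shift (-g) (shift g x) = x := by
        rw [shift_shift, add_neg_cancel, shift_zero]
      have hgball' : -g ∈ ballZ n d := mem_ballZ.mpr (by rw [gnorm_neg n g]; exact hgd)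
      apply Kmk_sep h2 (g := -g) ?_ hgball' ?_
      · rw [hx']; exact h1
      · rw [hx']; exact hlt2

/-! ### owner characterization and deep points -/

lemma own_char {x' : Space n} (hx' : x' ∈ FreePart n) {v : Fin n → ℤ}
    (h1 : Rm n d m0 (shift v x')) (h2 : Nn n d m0 v ≤ Qc n d m0)
    (h3 : ∀ v', Rm n d m0 (shift v' x') → Nn n d m0 v' ≤ Qc n d m0 →
      fp (Brad n d m0) (shift v x') ≤ fp (Brad n d m0) (shift v' x')) :
    ownv n d m0 x' = v ∧ fOwn n d m0 x' = fp (Brad n d m0) (shift v x') := by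
  have hvc : v ∈ cands n d m0 x' := (mem_cands n d m0).mpr ⟨h2, h1⟩
  have hle : fOwn n d m0 x' ≤ fp (Brad n d m0) (shift v x') := fOwn_le n d m0 hvc
  obtain ⟨g, hg, he⟩ := fOwn_exists n d m0 x'
  have hge : fp (Brad n d m0) (shift v x') ≤ fOwn n d m0 x' := by
    rw [← he]
    exact h3 g ((mem_cands n d m0).mp hg).2 ((mem_cands n d m0).mp hg).1
  have heq : fOwn n d m0 x' = fp (Brad n d m0) (shift v x') := le_antisymm hle hge
  exact ⟨(ownv_unique n d m0 hx' hvc heq.symm).symm, heq⟩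

/-- `w` is a deep owner for the point `u` (absolute positions rel. `x`) -/
def Deep (x : Space n) (u w : Fin n → ℤ) : Prop :=
  Rm n d m0 (shift w x) ∧ Nn n d m0 (w - u) ≤ Qc n d m0 - Ec n d m0 ∧
    ∀ v, Rm n d m0 (shift v x) → Nn n d m0 (v - u) ≤ Qc n d m0 + Ec n d m0 →
      fp (Brad n d m0) (shift w x) ≤ fp (Brad n d m0) (shift v x)

lemma Ec_le_Qc : Ec n d m0 ≤ Qc n d m0 := by
  unfold Ec Qc
  apply Nat.mul_le_mul_left
  have h1 : (pc n d m0 + 1) ≤ Lc n d m0 := by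
    unfold Lc
    exact Nat.le_mul_of_pos_right _ (by omega)
  have h2 : (pc n d m0 + 1) * m0 ≤ Lc n d m0 * (m0 + 1) :=
    Nat.mul_le_mul h1 (by omega)
  unfold Qhat
  omega

/-- stability of ownership near a deep point -/
lemma deep_own {x : Space n} (hx : x ∈ FreePart n) {u w : Fin n → ℤ}
    (hd : Deep n d m0 x u w) {z : Fin n → ℤ} (hz : Nn n d m0 (z - u) ≤ Ec n d m0) :
    ownv n d m0 (shift z x) = w - z ∧
      fOwn n d m0 (shift z x) = fp (Brad n d m0) (shift w x) := by
  obtain ⟨hmk, hnear, hmin⟩ := hd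
  have hEQ := Ec_le_Qc n d m0
  have ev : z + (w - z) = w := by ring
  have e0 : shift (w - z) (shift z x) = shift w x := by
    rw [shift_shift, ev]
  have key := own_char n d m0 (freePart_shift hx z) (v := w - z) ?_ ?_ ?_
  · rw [e0] at key
    exact key
  · rw [e0]; exact hmk
  · have e : w - z = (w - u) + (u - z) := by abel
    rw [e]
    calc Nn n d m0 ((w - u) + (u - z)) ≤ Nn n d m0 (w - u) + Nn n d m0 (u - z) :=
          Nn_add_le n d m0 _ _
      _ ≤ (Qc n d m0 - Ec n d m0) + Nn n d m0 (u - z) := by omega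
      _ ≤ Qc n d m0 := by
          have e2 : u - z = -(z - u) := by abel
          rw [e2, Nn_neg]
          omega
  · intro v' hv1 hv2
    rw [e0]
    have e : shift v' (shift z x) = shift (z + v') x := by rw [shift_shift]
    rw [e] at hv1 ⊢
    apply hmin
    · exact hv1
    · have e2 : (z + v') - u = v' + (z - u) := by abel
      rw [e2]
      calc Nn n d m0 (v' + (z - u)) ≤ Nn n d m0 v' + Nn n d m0 (z - u) := Nn_add_le n d m0 _ _
        _ ≤ Qc n d m0 + Ec n d m0 := by omega

/-- a deep point on the right coset near a deep base point is kept -/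
lemma deep_kept' {x : Space n} (hx : x ∈ FreePart n) {u0 w u : Fin n → ℤ}
    (hd : Deep n d m0 x u0 w) (hnear : Nn n d m0 (u - u0) + CN n d m0 * d ≤ Ec n d m0)
    (hcong : psi n d m0 (w - u) = 0) : keptP n d m0 (shift u x) := by
  have hown0 := deep_own n d m0 hx hd (z := u) (by omega)
  unfold keptP
  rw [Kmk_def]
  constructor
  · rw [hown0.1]; exact hcong
  · intro g hgB hlt
    exfalso
    rw [shift_shift] at hlt
    have hz : Nn n d m0 ((u + g) - u0) ≤ Ec n d m0 := by
      have e : (u + g) - u0 = (u - u0) + g := by ring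
      rw [e]
      have h2 := Nn_add_le n d m0 (u - u0) g
      have h3 : Nn n d m0 g ≤ CN n d m0 * d :=
        le_trans (Nn_le n d m0 g) (Nat.mul_le_mul_left _ (mem_ballZ.mp hgB))
      omega
    have hown1 := deep_own n d m0 hx hd hz
    rw [hown1.2, hown0.2] at hlt
    omega

lemma Qhat_pos : 0 < Qhat n d m0 := by unfold Qhat; omega

lemma marker_sep_gnorm {x : Space n} (hx : x ∈ FreePart n)
    {v v' : Fin n → ℤ} (h1 : Rm n d m0 (shift v x)) (h2 : Rm n d m0 (shift v' x))
    (hne : v ≠ v') : Qhat n d m0 + 1 ≤ gnorm (v - v') := by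
  by_contra hc
  push_neg at hc
  have hNn : Nn n d m0 (v' - v) ≤ Qc n d m0 := by
    have h4 := Nn_le n d m0 (v' - v)
    have hg : gnorm (v' - v) ≤ Qhat n d m0 := by
      have e : v' - v = -(v - v') := by ring
      rw [e, gnorm_neg]
      omega
    calc Nn n d m0 (v' - v) ≤ CN n d m0 * gnorm (v' - v) := h4
      _ ≤ CN n d m0 * Qhat n d m0 := Nat.mul_le_mul_left _ hg
      _ = Qc n d m0 := rfl
  have hcomp : shift (v' - v) (shift v x) = shift v' x := by
    rw [shift_shift]
    congr 1
    ring
  apply Rm_sep n d m0 (freePart_shift hx v) (g := v' - v) (sub_ne_zero.mpr (Ne.symm hne)) hNn h1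
  rw [hcomp]
  exact h2

noncomputable def rhoBig : ℕ := (Lc n d m0) * m0 + Qc n d m0 + Ec n d m0

open scoped Classical in
lemma marker_count {x : Space n} (hx : x ∈ FreePart n) :
    (((ballZ n (rhoBig n d m0)).filter (fun v => Rm n d m0 (shift v x))).card : ℕ)
      ≤ gam n d m0 := by
  classical
  have hsep : ∀ v ∈ (ballZ n (rhoBig n d m0)).filter (fun v => Rm n d m0 (shift v x)),
      ∀ v' ∈ (ballZ n (rhoBig n d m0)).filter (fun v => Rm n d m0 (shift v x)),
      v ≠ v' → Qhat n d m0 + 1 ≤ gnorm (v - v') := by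
    intro v hv v' hv' hne
    exact marker_sep_gnorm n d m0 hx (Finset.mem_filter.mp hv).2 (Finset.mem_filter.mp hv').2 hne
  have hcount := sep_count (rhoBig n d m0) (Qhat n d m0) _ (Finset.filter_subset _ _) hsep
  refine le_trans hcount ?_
  unfold gam
  apply Nat.pow_le_pow_left
  have hbound : 2 * rhoBig n d m0 ≤ (4 * CN n d m0 + 2) * (Qhat n d m0 + 1) := by
    unfold rhoBig
    have e1 : Lc n d m0 * m0 ≤ Qhat n d m0 := by
      unfold Qhat
      nlinarith [Nat.zero_le (Lc n d m0)]
    have e2 : Ec n d m0 ≤ Qc n d m0 := Ec_le_Qc n d m0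
    have e3 : Qc n d m0 = CN n d m0 * Qhat n d m0 := rfl
    nlinarith [Nat.zero_le (CN n d m0), Nat.zero_le (Qhat n d m0)]
  have h5 := Nat.div_le_div_right (c := Qhat n d m0 + 1) hbound
  rw [Nat.mul_div_cancel _ (by omega : 0 < Qhat n d m0 + 1)] at h5
  omega

lemma hitting {x : Space n} (hx : x ∈ FreePart n) {s : Fin n → ℤ}
    (hs : s ≠ 0) (hsm : gnorm s ≤ m0) :
    ∃ k : ℕ, k ≤ Lc n d m0 ∧ keptP n d m0 (shift ((k:ℤ) • s) x) := by
  classical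
  haveI : Fact (pc n d m0).Prime := ⟨pc_prime n d m0⟩
  have hEQ := Ec_le_Qc n d m0
  -- step 1: shallow buckets have shell markers
  have shallow_shell : ∀ k : ℕ, (¬ ∃ w, Deep n d m0 x ((k:ℤ) • s) w) →
      ∃ v, Rm n d m0 (shift v x) ∧
        Qc n d m0 - Ec n d m0 < Nn n d m0 (v - (k:ℤ) • s) ∧
        Nn n d m0 (v - (k:ℤ) • s) ≤ Qc n d m0 + Ec n d m0 := by
    intro k hk
    set u : Fin n → ℤ := (k:ℤ) • s with hu
    set V : Finset (Fin n → ℤ) := (ballZ n (Qc n d m0 + Ec n d m0)).filter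
      (fun t => Nn n d m0 t ≤ Qc n d m0 + Ec n d m0 ∧ Rm n d m0 (shift (u + t) x)) with hV
    have hVne : V.Nonempty := by
      obtain ⟨g, hg1, hg2⟩ := Rm_escape n d m0 (shift u x)
      rw [shift_shift] at hg2
      refine ⟨g, Finset.mem_filter.mpr ⟨mem_ballZ.mpr ?_, by omega, hg2⟩⟩
      exact le_trans (le_trans (gnorm_le_Nn n d m0 g) hg1) (by omega)
    obtain ⟨t0, ht0V, ht0min⟩ := Finset.exists_min_image V
      (fun t => fp (Brad n d m0) (shift (u + t) x)) hVne
    have hmk0 : Rm n d m0 (shift (u + t0) x) := (Finset.mem_filter.mp ht0V).2.2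
    have hNt0 : Nn n d m0 t0 ≤ Qc n d m0 + Ec n d m0 := (Finset.mem_filter.mp ht0V).2.1
    have hsubt : (u + t0) - u = t0 := by ring
    by_cases hcase : Nn n d m0 t0 ≤ Qc n d m0 - Ec n d m0
    · exfalso
      apply hk
      refine ⟨u + t0, hmk0, ?_, ?_⟩
      · rw [hsubt]; exact hcase
      · intro v hv1 hv2
        have he : u + (v - u) = v := by ring
        have hvV : v - u ∈ V := by
          refine Finset.mem_filter.mpr ⟨mem_ballZ.mpr ?_, hv2, ?_⟩
          · exact le_trans (gnorm_le_Nn n d m0 _) hv2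
          · rw [he]; exact hv1
        have h6 := ht0min (v - u) hvV
        rw [he] at h6
        exact h6
    · refine ⟨u + t0, hmk0, ?_, ?_⟩
      · rw [hsubt]; omega
      · rw [hsubt]; exact hNt0
  -- step 2: not all bucket starts are shallow
  have hstep2 : ∃ j : ℕ, j < gam n d m0 * tau n d m0 + 2 ∧
      ∃ w, Deep n d m0 x (((j * (pc n d m0 + 1) : ℕ):ℤ) • s) w := by
    by_contra hcon
    push_neg at hcon
    have hsh : ∀ j : ℕ, ∃ v, j < gam n d m0 * tau n d m0 + 2 →
        (Rm n d m0 (shift v x) ∧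
          Qc n d m0 - Ec n d m0 < Nn n d m0 (v - ((j * (pc n d m0 + 1) : ℕ):ℤ) • s) ∧
          Nn n d m0 (v - ((j * (pc n d m0 + 1) : ℕ):ℤ) • s) ≤ Qc n d m0 + Ec n d m0) := by
      intro j
      by_cases hj : j < gam n d m0 * tau n d m0 + 2
      · obtain ⟨v, hv⟩ := shallow_shell (j * (pc n d m0 + 1)) (not_exists.mpr (hcon j hj))
        exact ⟨v, fun _ => hv⟩
      · exact ⟨0, fun h => absurd h hj⟩
    choose vf hvf using hsh
    set Mfin := (ballZ n (rhoBig n d m0)).filter (fun v => Rm n d m0 (shift v x)) with hMfin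
    set shellK : (Fin n → ℤ) → Finset ℕ := fun v => (Finset.range (Lc n d m0 + 1)).filter
      (fun k => Qc n d m0 - Ec n d m0 < lineN (Tc n d m0) v s k ∧
        lineN (Tc n d m0) v s k ≤ (Qc n d m0 - Ec n d m0) + 2 * Ec n d m0) with hshellK
    have hNL : ∀ (v : Fin n → ℤ) (k : ℕ), lineN (Tc n d m0) v s k = Nn n d m0 (v - (k:ℤ) • s) :=
      fun _ _ => rfl
    have hkLe : ∀ j : ℕ, j < gam n d m0 * tau n d m0 + 2 →
        j * (pc n d m0 + 1) ≤ Lc n d m0 := by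
      intro j hj
      have : j * (pc n d m0 + 1) ≤ (gam n d m0 * tau n d m0 + 1) * (pc n d m0 + 1) :=
        Nat.mul_le_mul_right _ (by omega)
      have e : Lc n d m0 = (pc n d m0 + 1) * (gam n d m0 * tau n d m0 + 2) := rfl
      nlinarith
    have hsubKS : (Finset.range (gam n d m0 * tau n d m0 + 2)).image
        (fun j => j * (pc n d m0 + 1)) ⊆ Mfin.biUnion shellK := by
      intro k hk
      obtain ⟨j, hj, hjk⟩ := Finset.mem_image.mp hk
      rw [Finset.mem_range] at hj
      obtain ⟨h1, h2, h3⟩ := hvf j hj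
      apply Finset.mem_biUnion.mpr
      refine ⟨vf j, ?_, ?_⟩
      · rw [hMfin]
        refine Finset.mem_filter.mpr ⟨mem_ballZ.mpr ?_, h1⟩
        have e4 : vf j = (vf j - ((j * (pc n d m0 + 1) : ℕ):ℤ) • s) +
            ((j * (pc n d m0 + 1) : ℕ):ℤ) • s := by ring
        rw [e4]
        refine le_trans (gnorm_add_le n _ _) ?_
        have b1 : gnorm (vf j - ((j * (pc n d m0 + 1) : ℕ):ℤ) • s) ≤ Qc n d m0 + Ec n d m0 :=
          le_trans (gnorm_le_Nn n d m0 _) h3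
        have b2 : gnorm (((j * (pc n d m0 + 1) : ℕ):ℤ) • s) ≤ Lc n d m0 * m0 := by
          refine le_trans (gnorm_smul_le _ _) ?_
          exact Nat.mul_le_mul (hkLe j hj) hsm
        unfold rhoBig
        omega
      · rw [hshellK, ← hjk]
        refine Finset.mem_filter.mpr ⟨Finset.mem_range.mpr (by have := hkLe j hj; omega), ?_, ?_⟩
        · rw [hNL]; exact h2
        · rw [hNL]
          omega
    have hcard1 : gam n d m0 * tau n d m0 + 2 ≤ (Mfin.biUnion shellK).card := by
      have hinj : ((Finset.range (gam n d m0 * tau n d m0 + 2)).image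
          (fun j => j * (pc n d m0 + 1))).card = gam n d m0 * tau n d m0 + 2 := by
        rw [Finset.card_image_of_injective _ (fun a b hab => by
          have : (pc n d m0 + 1) > 0 := by omega
          exact Nat.eq_of_mul_eq_mul_right this hab), Finset.card_range]
      rw [← hinj]
      exact Finset.card_le_card hsubKS
    have hcard2 : (Mfin.biUnion shellK).card ≤ gam n d m0 * tau n d m0 := by
      refine le_trans Finset.card_biUnion_le ?_
      have hper : ∀ v ∈ Mfin, (shellK v).card ≤ tau n d m0 := by
        intro v _
        rw [hshellK]
        have := shell_count_gen (Tc n d m0) (Ec n d m0) (Qc n d m0 - Ec n d m0) m0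
          (by unfold Tc; omega) v s hs hsm (Lc n d m0 + 1)
        refine le_trans this ?_
        unfold tau
        omega
      calc (∑ v ∈ Mfin, (shellK v).card) ≤ ∑ _v ∈ Mfin, tau n d m0 :=
            Finset.sum_le_sum hper
        _ = Mfin.card * tau n d m0 := by rw [Finset.sum_const]; ring
        _ ≤ gam n d m0 * tau n d m0 :=
            Nat.mul_le_mul_right _ (marker_count n d m0 hx)
    omega
  -- step 3: produce the kept point
  obtain ⟨j, hjlt, w, hw⟩ := hstep2
  have hpsis : psi n d m0 s ≠ 0 := fun h =>
    hs (psi_zero_small n d m0 (B := m0) hsm (by omega) h)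
  set u0 : Fin n → ℤ := ((j * (pc n d m0 + 1) : ℕ):ℤ) • s with hu0
  set a : ℕ := (psi n d m0 (w - u0) * (psi n d m0 s)⁻¹).val with ha
  have halt : a < pc n d m0 := ZMod.val_lt _
  refine ⟨j * (pc n d m0 + 1) + a, ?_, ?_⟩
  · have h7 : j * (pc n d m0 + 1) ≤ (gam n d m0 * tau n d m0 + 1) * (pc n d m0 + 1) :=
      Nat.mul_le_mul_right _ (by omega)
    have e : Lc n d m0 = (pc n d m0 + 1) * (gam n d m0 * tau n d m0 + 2) := rfl
    nlinarith
  · have ecast : ((j * (pc n d m0 + 1) + a : ℕ):ℤ) • s - u0 = ((a:ℕ):ℤ) • s := by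
      rw [hu0]
      funext i
      show ((j * (pc n d m0 + 1) + a : ℕ):ℤ) * s i - ((j * (pc n d m0 + 1) : ℕ):ℤ) * s i
        = ((a:ℕ):ℤ) * s i
      push_cast
      ring
    apply deep_kept' n d m0 hx hw (u := ((j * (pc n d m0 + 1) + a : ℕ):ℤ) • s) ?_ ?_
    · rw [ecast]
      have b1 : Nn n d m0 (((a:ℕ):ℤ) • s) ≤ CN n d m0 * (a * m0) := by
        refine le_trans (Nn_le n d m0 _) ?_
        exact Nat.mul_le_mul_left _ (le_trans (gnorm_smul_le _ _) (Nat.mul_le_mul_left _ hsm))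
      have b2 : CN n d m0 * (a * m0) + CN n d m0 * d ≤ Ec n d m0 := by
        unfold Ec
        rw [← Nat.mul_add]
        apply Nat.mul_le_mul_left
        have : a * m0 ≤ (pc n d m0 + 1) * m0 := Nat.mul_le_mul_right _ (by omega)
        omega
      omega
    · have e2 : w - ((j * (pc n d m0 + 1) + a : ℕ):ℤ) • s
          = (w - u0) + (-(((a:ℕ):ℤ) • s)) := by
        have : ((j * (pc n d m0 + 1) + a : ℕ):ℤ) • s = u0 + ((a:ℕ):ℤ) • s := by
          have e3 := ecast
          have : ((j * (pc n d m0 + 1) + a : ℕ):ℤ) • s =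
              (((j * (pc n d m0 + 1) + a : ℕ):ℤ) • s - u0) + u0 := by ring
          rw [this, e3]
          ring
        rw [this]
        ring
      rw [e2, psi_add, psi_neg, psi_intsmul]
      have hval : ((a:ℕ) : ZMod (pc n d m0)) = psi n d m0 (w - u0) * (psi n d m0 s)⁻¹ := by
        rw [ha, ZMod.natCast_val, ZMod.cast_id]
      push_cast
      rw [hval, mul_assoc, inv_mul_cancel₀ hpsis, mul_one]
      ring

/-! ### local determination and clopenness -/

lemma own_det : ∀ x ∈ FreePart n, ∃ W : Finset (Fin n → ℤ), ∀ y ∈ FreePart n,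
    (∀ w ∈ W, y w = x w) →
      (fOwn n d m0 y = fOwn n d m0 x ∧ ownv n d m0 y = ownv n d m0 x) := by
  intro x hx
  classical
  have RmDet : ∀ z ∈ FreePart n, ∃ W : Finset (Fin n → ℤ), ∀ y' ∈ FreePart n,
      (∀ w ∈ W, y' w = z w) → (Rm n d m0 y' ↔ Rm n d m0 z) := by
    apply Kmk_det
    · intro z hz
      exact ⟨fdep (Brad n d m0) z, fun y' _ hag => fp_det (Brad n d m0) hz hag⟩
    · intro z _
      exact ⟨∅, fun y' _ _ => Iff.rfl⟩
  choose WR hWR using RmDet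
  set W : Finset (Fin n → ℤ) := (BQ n d m0).biUnion (fun g =>
      ((WR (shift g x) (freePart_shift hx g)) ∪ fdep (Brad n d m0) (shift g x)).image
        (fun w => g + w)) with hW
  refine ⟨W, fun y hy hagree => ?_⟩
  have hagg : ∀ g ∈ BQ n d m0,
      ∀ w ∈ WR (shift g x) (freePart_shift hx g) ∪ fdep (Brad n d m0) (shift g x),
      (shift g y) w = (shift g x) w := by
    intro g hgB w hw
    show y (g + w) = x (g + w)
    apply hagree
    rw [hW]
    exact Finset.mem_biUnion.mpr ⟨g, hgB, Finset.mem_image.mpr ⟨w, hw, rfl⟩⟩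
  have hRm : ∀ g ∈ BQ n d m0, (Rm n d m0 (shift g y) ↔ Rm n d m0 (shift g x)) := by
    intro g hgB
    exact hWR (shift g x) (freePart_shift hx g) (shift g y) (freePart_shift hy g)
      (fun w hw => hagg g hgB w (Finset.mem_union_left _ hw))
  have hfp : ∀ g ∈ BQ n d m0, fp (Brad n d m0) (shift g y) = fp (Brad n d m0) (shift g x) := by
    intro g hgB
    exact fp_det (Brad n d m0) (freePart_shift hx g)
      (fun w hw => hagg g hgB w (Finset.mem_union_right _ hw))
  have hcands : cands n d m0 y = cands n d m0 x := by
    ext g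
    rw [mem_cands, mem_cands]
    by_cases hgB : Nn n d m0 g ≤ Qc n d m0
    · have := hRm g ((mem_BQ n d m0).mpr hgB)
      tauto
    · tauto
  have hfOwn : fOwn n d m0 y = fOwn n d m0 x := by
    apply le_antisymm
    · obtain ⟨g, hg, he⟩ := fOwn_exists n d m0 x
      have hg' : g ∈ cands n d m0 y := by rw [hcands]; exact hg
      calc fOwn n d m0 y ≤ fp (Brad n d m0) (shift g y) := fOwn_le n d m0 hg'
        _ = fp (Brad n d m0) (shift g x) :=
            hfp g ((mem_BQ n d m0).mpr ((mem_cands n d m0).mp hg).1)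
        _ = fOwn n d m0 x := he
    · obtain ⟨g, hg, he⟩ := fOwn_exists n d m0 y
      have hg' : g ∈ cands n d m0 x := by rw [← hcands]; exact hg
      calc fOwn n d m0 x ≤ fp (Brad n d m0) (shift g x) := fOwn_le n d m0 hg'
        _ = fp (Brad n d m0) (shift g y) :=
            (hfp g ((mem_BQ n d m0).mpr ((mem_cands n d m0).mp hg).1)).symm
        _ = fOwn n d m0 y := he
  have hownv : ownv n d m0 y = ownv n d m0 x := by
    obtain ⟨hgc, hge⟩ := ownv_spec n d m0 y
    have hc : ownv n d m0 y ∈ cands n d m0 x := by rw [← hcands]; exact hgc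
    have heq : fp (Brad n d m0) (shift (ownv n d m0 y) x) = fOwn n d m0 x := by
      rw [← hfp _ ((mem_BQ n d m0).mpr ((mem_cands n d m0).mp hc).1), hge, hfOwn]
    exact ownv_unique n d m0 hx hc heq
  exact ⟨hfOwn, hownv⟩

lemma kept_det : ∀ x ∈ FreePart n, ∃ W : Finset (Fin n → ℤ), ∀ y ∈ FreePart n,
    (∀ w ∈ W, y w = x w) → (keptP n d m0 y ↔ keptP n d m0 x) := by
  apply Kmk_det
  · intro x hx
    obtain ⟨W, hW⟩ := own_det n d m0 x hx
    exact ⟨W, fun y hy hag => (hW y hy hag).1⟩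
  · intro x hx
    obtain ⟨W, hW⟩ := own_det n d m0 x hx
    exact ⟨W, fun y hy hag => by rw [(hW y hy hag).2]⟩

end Consts
end W13
end W13section

open Finset in
theorem stmt13 (n d : ℕ) (hn : 1 ≤ n) (hd : 1 ≤ d)
    (S : Finset (Fin n → ℤ))
    (hgen : AddSubgroup.closure (S : Set (Fin n → ℤ)) = ⊤)
    (hS : ∀ g ∈ S, (Finset.univ.filter fun i => g i ≠ 0).card = 1 ∨
                   (Finset.univ.filter fun i => g i ≠ 0).card = n) :
    ∃ (Δ : ℕ) (M : Set (Space n)),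
      d ≤ Δ ∧ M ⊆ FreePart n ∧
      IsClopen {x : FreePart n | (x : Space n) ∈ M} ∧
      (∀ x ∈ M, ∀ g : Fin n → ℤ, g ≠ 0 → shift g x ∈ M → d ≤ gnorm g) ∧
      (∀ g ∈ S, ∀ x ∈ FreePart n, ∃ a b : ℕ, a ≤ Δ ∧ b ≤ Δ ∧
        shift ((a : ℤ) • g) x ∈ M ∧ shift ((-(b : ℤ)) • g) x ∈ M) := by
  classical
  set m0 : ℕ := S.sup gnorm with hm0
  refine ⟨W13.Lc n d m0 + d, W13.Mset n d m0, by omega, ?_, ?_, ?_, ?_⟩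
  · intro x hx
    exact hx.1
  · have he : {x : FreePart n | (x : Space n) ∈ W13.Mset n d m0}
        = {x : FreePart n | W13.keptP n d m0 (x : Space n)} := by
      ext z
      simp only [Set.mem_setOf_eq, W13.Mset]
      exact ⟨fun h => h.2, fun h => ⟨z.2, h⟩⟩
    rw [he]
    exact W13.clopen_of_det (W13.kept_det n d m0)
  · intro x hxM g hg hgM
    by_contra hcon
    push_neg at hcon
    exact W13.kept_sep n d m0 hxM.1 hg (by omega) hxM.2 hgM.2
  · intro g hgS x hxF
    have hgm : gnorm g ≤ m0 := by
      rw [hm0]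
      exact Finset.le_sup hgS
    have hgne : g ≠ 0 := by
      have hcard : 1 ≤ (Finset.univ.filter fun i => g i ≠ 0).card := by
        rcases hS g hgS with h | h <;> omega
      have hne : (Finset.univ.filter fun i => g i ≠ 0).Nonempty := by
        rw [← Finset.card_pos]
        omega
      obtain ⟨i, hi⟩ := hne
      rw [Finset.mem_filter] at hi
      intro hg0
      exact hi.2 (by rw [hg0]; rfl)
    obtain ⟨ka, hka, hkal⟩ := W13.hitting n d m0 hxF hgne hgm
    obtain ⟨kb, hkb, hkbl⟩ := W13.hitting n d m0 (s := -g) hxF (neg_ne_zero.mpr hgne)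
      (by rw [W13.gnorm_neg n g]; exact hgm)
    refine ⟨ka, kb, by omega, by omega, ⟨W13.freePart_shift hxF _, hkal⟩, ?_⟩
    have e : (-(kb:ℤ)) • g = ((kb:ℕ):ℤ) • (-g) := by
      rw [smul_neg, neg_smul]
    rw [e]
    exact ⟨W13.freePart_shift hxF _, hkbl⟩
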